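/- Let G be a finite connected simple graph with independent boundary B ⊆ V, |B| ≥ 2, and let Ĝ be obtained by adding all edges between pairs of boundary nodes. Then Ĝ is 2-connected if and only if every interior vertex of G lies on a simple path in G between two distinct boundary nodes. -/

import Mathlib

open SimpleGraph Walk

section helpers
variable {V : Type*} {G Ghat : SimpleGraph V} {B : Set V}

lemma trim_lemma [DecidableEq V] (S : Set V) [DecidablePred (· ∈ S)]
    (hGhat : ∀ i j : V, Ghat.Adj i j ↔ (G.Adj i j ∨ (i ∈ B ∧ j ∈ B ∧ i ≠ j)))
    (hBS : B ⊆ S) :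
    ∀ {i b : V} (W : Ghat.Walk i b), i ∉ S → b ∈ S →
      ∃ w ∈ S, ∃ r : G.Walk i w, r.IsPath ∧ (∀ x ∈ r.support, x ∈ S → x = w) ∧
        ∀ x ∈ r.support, x ∈ W.support := by
  intro i b W
  induction W with
  | nil => intro h1 h2; exact absurd h2 h1
  | @cons i x b h W ih =>
    intro hiS hbS
    have hGadj : G.Adj i x := by
      rcases (hGhat i x).1 h with h' | ⟨hiB, _, _⟩
      · exact h'
      · exact absurd (hBS hiB) hiS
    by_cases hxS : x ∈ S
    · refine ⟨x, hxS, Walk.cons hGadj Walk.nil, ?_, ?_, ?_⟩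
      · rw [Walk.cons_isPath_iff]
        simp [hGadj.ne]
      · intro y hy _
        simp only [Walk.support_cons, Walk.support_nil, List.mem_cons,
          List.mem_singleton] at hy
        rcases hy with rfl | hy
        · exact absurd ‹y ∈ S› hiS
        · simpa using hy
      · intro y hy
        simp only [Walk.support_cons, Walk.support_nil, List.mem_cons,
          List.not_mem_nil, or_false] at hy
        rcases hy with rfl | rfl
        · exact Walk.start_mem_support _
        · simp [Walk.support_cons, Walk.start_mem_support]
    · obtain ⟨w, hwS, r, hr, hrS, hrsub⟩ := ih hxS hbS
      by_cases hir : i ∈ r.support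
      · refine ⟨w, hwS, r.dropUntil i hir, hr.dropUntil hir, ?_, ?_⟩
        · intro y hy hyS
          exact hrS y (Walk.support_dropUntil_subset _ _ hy) hyS
        · intro y hy
          have := hrsub y (Walk.support_dropUntil_subset _ _ hy)
          simp [Walk.support_cons, this]
      · refine ⟨w, hwS, Walk.cons hGadj r, hr.cons hir, ?_, ?_⟩
        · intro y hy hyS
          simp only [Walk.support_cons, List.mem_cons] at hy
          rcases hy with rfl | hy
          · exact absurd hyS hiS
          · exact hrS y hy hyS
        · intro y hy
          simp only [Walk.support_cons, List.mem_cons] at hy ⊢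
          rcases hy with rfl | hy
          · left; rfl
          · right; exact hrsub y hy


lemma induce_reach_to_walk {v : V} {a b : {w : V | w ≠ v}}
    (h : (Ghat.induce {w : V | w ≠ v}).Reachable a b) :
    ∃ W : Ghat.Walk a.1 b.1, v ∉ W.support := by
  obtain ⟨p⟩ := h
  refine ⟨p.map (SimpleGraph.Hom.comap (Function.Embedding.subtype _) Ghat), ?_⟩
  erw [Walk.support_map]
  intro hv
  obtain ⟨⟨y, hy⟩, _, h2⟩ := List.mem_map.1 hv
  exact hy h2

lemma walk_to_induce_reach {v : V}
    (hle : ∀ a b : V, G.Adj a b → Ghat.Adj a b) :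
    ∀ {x y : V} (p : G.Walk x y) (hp : v ∉ p.support) (hx : x ≠ v) (hy : y ≠ v),
    (Ghat.induce {w : V | w ≠ v}).Reachable ⟨x, hx⟩ ⟨y, hy⟩ := by
  intro x y p
  induction p with
  | nil => intro _ hx _; rfl
  | @cons x z y h p ih =>
    intro hv hx hy
    simp only [Walk.support_cons, List.mem_cons] at hv
    push_neg at hv
    have hz : z ≠ v := fun hzv => hv.2 (hzv ▸ Walk.start_mem_support p)
    have : (Ghat.induce {w : V | w ≠ v}).Adj ⟨x, hx⟩ ⟨z, hz⟩ := hle x z h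
    exact this.reachable.trans (ih hv.2 hz hy)


lemma split_props [DecidableEq V] {a b c : V} {p : G.Walk a b} (hp : p.IsPath)
    (hc : c ∈ p.support) :
    (∀ x, x ∈ (p.takeUntil c hc).support → x ∈ (p.dropUntil c hc).support → x = c) ∧
    (a ≠ c → a ∉ (p.dropUntil c hc).support) := by
  have hnd : p.support.Nodup := hp.support_nodup
  rw [← Walk.take_spec p hc, Walk.support_append, List.nodup_append] at hnd
  obtain ⟨-, -, hdisj⟩ := hnd
  have key : ∀ x, x ∈ (p.takeUntil c hc).support → x ∈ (p.dropUntil c hc).support → x = c := by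
    intro x hx1 hx2
    by_contra hxc
    rw [Walk.support_eq_cons (p.dropUntil c hc), List.mem_cons] at hx2
    rcases hx2 with rfl | hx2
    · exact hxc rfl
    · exact hdisj x hx1 x hx2 rfl
  refine ⟨key, fun hac hmem => hac (key a (Walk.start_mem_support _) hmem)⟩

/-- Conclusion predicate: `i` lies on a B–B path. -/
def OnBB (G : SimpleGraph V) (B : Set V) (i : V) : Prop :=
  ∃ j ∈ B, ∃ j' ∈ B, j ≠ j' ∧ ∃ q : G.Walk j j', q.IsPath ∧ i ∈ q.support

lemma glue [DecidableEq V] {u i c1 c2 w : V}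
    (a1 : G.Walk u c1) (a2 : G.Walk u c2) (r : G.Walk i w)
    (ha1 : a1.IsPath) (ha2 : a2.IsPath) (hr : r.IsPath)
    (hint : ∀ x, x ∈ a1.support → x ∈ a2.support → x = u)
    (hadj : G.Adj u i)
    (hur : u ∉ r.support)
    (hrS : ∀ x ∈ r.support, (x ∈ B ∨ x ∈ a1.support ∨ x ∈ a2.support) → x = w)
    (hc1 : c1 ∈ B) (hc2 : c2 ∈ B) (hne : c1 ≠ c2)
    (hw : (w ∈ a2.support ∧ w ≠ u) ∨ (w ∈ B ∧ w ∉ a1.support)) :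
    OnBB G B i := by
  rcases hw with ⟨hwa2, hwu⟩ | ⟨hwB, hwa1⟩
  · -- w lies on a2 : route c1 → u → i → w → c2
    obtain ⟨key2, hu2⟩ := split_props ha2 hwa2
    have hua2b : u ∉ (a2.dropUntil w hwa2).support := hu2 hwu.symm
    set a2b := a2.dropUntil w hwa2 with ha2b
    have ha2bp : a2b.IsPath := ha2.dropUntil hwa2
    have hwtail : w ∉ a2b.support.tail := by
      have := ha2bp.support_nodup
      rw [Walk.support_eq_cons a2b, List.nodup_cons] at this
      exact this.1
    have htailsub : ∀ x ∈ a2b.support.tail, x ∈ a2b.support := by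
      intro x hx
      rw [Walk.support_eq_cons a2b]
      exact List.mem_cons_of_mem _ hx
    refine ⟨c1, hc1, c2, hc2, hne,
      a1.reverse.append (Walk.cons hadj (r.append a2b)), ?_, ?_⟩
    · rw [Walk.isPath_def, Walk.support_append, Walk.support_reverse]
      have htail : (Walk.cons hadj (r.append a2b)).support.tail
          = r.support ++ a2b.support.tail := by
        simp [Walk.support_cons, Walk.support_append]
      rw [htail, List.nodup_append]
      refine ⟨List.nodup_reverse.2 ha1.support_nodup, ?_, ?_⟩
      · rw [List.nodup_append]
        refine ⟨hr.support_nodup, ha2bp.support_nodup.tail, ?_⟩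
        intro x hx1 y hx2 hxy; subst hxy
        have hxw : x = w := hrS x hx1
          (Or.inr (Or.inr (Walk.support_dropUntil_subset a2 hwa2 (htailsub x hx2))))
        exact hwtail (hxw ▸ hx2)
      · intro x hx1 y hx2 hxy; subst hxy
        rw [List.mem_reverse] at hx1
        rcases List.mem_append.1 hx2 with hx2 | hx2
        · have hxw : x = w := hrS x hx2 (Or.inr (Or.inl hx1))
          exact hwu (hint w (hxw ▸ hx1) hwa2)
        · have hxu : x = u := hint x hx1
            (Walk.support_dropUntil_subset a2 hwa2 (htailsub x hx2))
          subst hxu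
          exact hua2b (htailsub x hx2)
    · rw [Walk.mem_support_append_iff]
      right
      rw [Walk.support_cons, List.mem_cons]
      right
      rw [Walk.mem_support_append_iff]
      exact Or.inl (Walk.start_mem_support r)
  · -- w ∈ B off a1 : route c1 → u → i → w
    refine ⟨c1, hc1, w, hwB, fun h => hwa1 (h ▸ Walk.end_mem_support a1),
      a1.reverse.append (Walk.cons hadj r), ?_, ?_⟩
    · rw [Walk.isPath_def, Walk.support_append, Walk.support_reverse]
      have htail : (Walk.cons hadj r).support.tail = r.support := by
        simp [Walk.support_cons]
      rw [htail, List.nodup_append]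
      refine ⟨List.nodup_reverse.2 ha1.support_nodup, hr.support_nodup, ?_⟩
      intro x hx1 y hx2 hxy; subst hxy
      rw [List.mem_reverse] at hx1
      exact hwa1 ((hrS x hx2 (Or.inr (Or.inl hx1))) ▸ hx1)
    · rw [Walk.mem_support_append_iff]
      right
      rw [Walk.support_cons, List.mem_cons]
      exact Or.inr (Walk.start_mem_support r)


lemma exists_ne_mem (hB2 : 2 ≤ Nat.card B) (x : V) : ∃ y ∈ B, y ≠ x := by
  have h1 : 1 < B.ncard := by
    rw [← Nat.card_coe_set_eq]; omega
  obtain ⟨y, hy, hyx⟩ := Set.exists_ne_of_one_lt_ncard h1 x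
  exact ⟨y, hy, hyx⟩

lemma base_case [DecidableEq V]
    (hGhat : ∀ i j : V, Ghat.Adj i j ↔ (G.Adj i j ∨ (i ∈ B ∧ j ∈ B ∧ i ≠ j)))
    (hB2 : 2 ≤ Nat.card B)
    (h2c : ∀ v : V, (Ghat.induce {w : V | w ≠ v}).Connected)
    {i u : V} (hadj : G.Adj i u) (hiB : i ∉ B) (huB : u ∈ B) : OnBB G B i := by
  classical
  obtain ⟨b2, hb2B, hb2u⟩ := exists_ne_mem hB2 u
  have hiu : i ≠ u := hadj.ne
  have hreach := (h2c u).preconnected ⟨i, hiu⟩ ⟨b2, hb2u⟩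
  obtain ⟨W, hWu⟩ := induce_reach_to_walk hreach
  obtain ⟨w, hwB, r, hrp, hrS, hrsub⟩ := trim_lemma (B := B) B hGhat (le_refl B) W hiB hb2B
  have hur : u ∉ r.support := fun h => hWu (hrsub u h)
  refine ⟨u, huB, w, hwB, fun h => hur (h ▸ Walk.end_mem_support r),
    Walk.cons hadj.symm r, ?_, ?_⟩
  · exact hrp.cons hur
  · rw [Walk.support_cons, List.mem_cons]
    exact Or.inr (Walk.start_mem_support r)

lemma step_case [DecidableEq V]
    (hGhat : ∀ i j : V, Ghat.Adj i j ↔ (G.Adj i j ∨ (i ∈ B ∧ j ∈ B ∧ i ≠ j)))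
    (h2c : ∀ v : V, (Ghat.induce {w : V | w ≠ v}).Connected)
    {i u : V} (hadj : G.Adj i u) (hiB : i ∉ B) (huB : u ∉ B)
    (hu : OnBB G B u) : OnBB G B i := by
  classical
  obtain ⟨c1, hc1, c2, hc2, hne, Q, hQ, huQ⟩ := hu
  by_cases hiQ : i ∈ Q.support
  · exact ⟨c1, hc1, c2, hc2, hne, Q, hQ, hiQ⟩
  set S : Set V := B ∪ {x | x ∈ Q.support} with hS
  have hBS : B ⊆ S := Set.subset_union_left
  have hiu : i ≠ u := hadj.ne
  have hc1u : c1 ≠ u := fun h => huB (h ▸ hc1)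
  have hreach := (h2c u).preconnected ⟨i, hiu⟩ ⟨c1, hc1u⟩
  obtain ⟨W, hWu⟩ := induce_reach_to_walk hreach
  have hiS : i ∉ S := by
    rintro (h | h)
    · exact hiB h
    · exact hiQ h
  have hc1S : c1 ∈ S := Or.inr (Walk.start_mem_support Q)
  obtain ⟨w, hwS, r, hrp, hrS, hrsub⟩ := trim_lemma (B := B) S hGhat hBS W hiS hc1S
  have hur : u ∉ r.support := fun h => hWu (hrsub u h)
  have hwu : w ≠ u := fun h => hur (h ▸ Walk.end_mem_support r)
  -- split Q at u
  set Q1 := Q.takeUntil u huQ with hQ1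
  set Q2 := Q.dropUntil u huQ with hQ2
  obtain ⟨keyQ, -⟩ := split_props hQ huQ
  have ha1 : Q1.reverse.IsPath := (hQ.takeUntil huQ).reverse
  have ha2 : Q2.IsPath := hQ.dropUntil huQ
  have hQ1sub : ∀ x ∈ Q1.support, x ∈ Q.support := fun x hx =>
    Walk.support_takeUntil_subset Q huQ hx
  have hQ2sub : ∀ x ∈ Q2.support, x ∈ Q.support := fun x hx =>
    Walk.support_dropUntil_subset Q huQ hx
  have hrS' : ∀ x ∈ r.support, (x ∈ B ∨ x ∈ Q1.reverse.support ∨ x ∈ Q2.support) → x = w := by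
    intro x hx hx'
    apply hrS x hx
    rcases hx' with h | h | h
    · exact Or.inl h
    · rw [Walk.support_reverse, List.mem_reverse] at h
      exact Or.inr (hQ1sub x h)
    · exact Or.inr (hQ2sub x h)
  have hrS'' : ∀ x ∈ r.support, (x ∈ B ∨ x ∈ Q2.support ∨ x ∈ Q1.reverse.support) → x = w := by
    intro x hx hx'
    apply hrS' x hx
    tauto
  have hint : ∀ x, x ∈ Q1.reverse.support → x ∈ Q2.support → x = u := by
    intro x hx1 hx2
    rw [Walk.support_reverse, List.mem_reverse] at hx1
    exact keyQ x hx1 hx2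
  rcases hwS with hwB | hwQ
  · by_cases hwQs : w ∈ Q.support
    · rw [← Walk.take_spec Q huQ, Walk.mem_support_append_iff] at hwQs
      rcases hwQs with h1 | h2
      · exact glue Q2 Q1.reverse r ha2 ha1 hrp (fun x a b => hint x b a) hadj.symm hur
          hrS'' hc2 hc1 hne.symm (Or.inl ⟨by rw [Walk.support_reverse, List.mem_reverse]; exact h1, hwu⟩)
      · exact glue Q1.reverse Q2 r ha1 ha2 hrp hint hadj.symm hur
          hrS' hc1 hc2 hne (Or.inl ⟨h2, hwu⟩)
    · refine glue Q1.reverse Q2 r ha1 ha2 hrp hint hadj.symm hur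
        hrS' hc1 hc2 hne (Or.inr ⟨hwB, ?_⟩)
      intro h
      rw [Walk.support_reverse, List.mem_reverse] at h
      exact hwQs (hQ1sub w h)
  · have hwQs : w ∈ Q.support := hwQ
    rw [← Walk.take_spec Q huQ, Walk.mem_support_append_iff] at hwQs
    rcases hwQs with h1 | h2
    · exact glue Q2 Q1.reverse r ha2 ha1 hrp (fun x a b => hint x b a) hadj.symm hur
        hrS'' hc2 hc1 hne.symm (Or.inl ⟨by rw [Walk.support_reverse, List.mem_reverse]; exact h1, hwu⟩)
    · exact glue Q1.reverse Q2 r ha1 ha2 hrp hint hadj.symm hur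
        hrS' hc1 hc2 hne (Or.inl ⟨h2, hwu⟩)

lemma fan [DecidableEq V]
    (hGhat : ∀ i j : V, Ghat.Adj i j ↔ (G.Adj i j ∨ (i ∈ B ∧ j ∈ B ∧ i ≠ j)))
    (hB2 : 2 ≤ Nat.card B)
    (h2c : ∀ v : V, (Ghat.induce {w : V | w ≠ v}).Connected) :
    ∀ {i b : V} (p : G.Walk i b), i ∉ B → b ∈ B → OnBB G B i := by
  intro i b p
  induction p with
  | nil => intro hiB hbB; exact absurd hbB hiB
  | @cons i x b h p ih =>
    intro hiB hbB
    by_cases hxB : x ∈ B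
    · exact base_case hGhat hB2 h2c h hiB hxB
    · exact step_case hGhat h2c h hiB hxB (ih hxB hbB)


lemma reach_to_boundary [DecidableEq V]
    (hGhat : ∀ i j : V, Ghat.Adj i j ↔ (G.Adj i j ∨ (i ∈ B ∧ j ∈ B ∧ i ≠ j)))
    (hyp : ∀ i : V, i ∉ B → OnBB G B i)
    (v : V) (a : V) (ha : a ≠ v) :
    ∃ c : V, ∃ hc : c ≠ v, c ∈ B ∧
      (Ghat.induce {w : V | w ≠ v}).Reachable ⟨a, ha⟩ ⟨c, hc⟩ := by
  classical
  have hle : ∀ x y : V, G.Adj x y → Ghat.Adj x y := fun x y h => (hGhat x y).2 (Or.inl h)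
  by_cases haB : a ∈ B
  · exact ⟨a, ha, haB, Reachable.refl _⟩
  · obtain ⟨j, hj, j', hj', hne, p, hp, hap⟩ := hyp a haB
    obtain ⟨keyP, -⟩ := split_props hp hap
    set p1 := p.takeUntil a hap with hp1
    set p2 := p.dropUntil a hap with hp2
    by_cases hv2 : v ∈ p2.support
    · have hv1 : v ∉ p1.support := fun h => ha.symm (keyP v h hv2)
      have hjv : j ≠ v := fun h => hv1 (h ▸ Walk.start_mem_support p1)
      have hrev : v ∉ p1.reverse.support := by
        rw [Walk.support_reverse, List.mem_reverse]; exact hv1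
      exact ⟨j, hjv, hj, walk_to_induce_reach hle p1.reverse hrev ha hjv⟩
    · have hjv : j' ≠ v := fun h => hv2 (h ▸ Walk.end_mem_support p2)
      exact ⟨j', hjv, hj', walk_to_induce_reach hle p2 hv2 ha hjv⟩

end helpers

theorem ghat_two_connected_iff
    (V : Type*) [Fintype V] (G : SimpleGraph V) (hconn : G.Connected)
    (B : Set V) (hB2 : 2 ≤ Nat.card B)
    (hBindep : ∀ i ∈ B, ∀ j ∈ B, ¬ G.Adj i j)
    (Ghat : SimpleGraph V)
    (hGhat : ∀ i j : V, Ghat.Adj i j ↔ (G.Adj i j ∨ (i ∈ B ∧ j ∈ B ∧ i ≠ j))) :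
    (3 ≤ Fintype.card V ∧ ∀ v : V, (Ghat.induce {w : V | w ≠ v}).Connected) ↔
      ∀ i : V, i ∉ B →
        ∃ j ∈ B, ∃ j' ∈ B, j ≠ j' ∧
          ∃ p : G.Walk j j', p.IsPath ∧ i ∈ p.support := by
  classical
  constructor
  · rintro ⟨hcard, h2c⟩ i hiB
    obtain ⟨b, hbB, -⟩ := exists_ne_mem hB2 i
    obtain ⟨p⟩ := hconn.preconnected i b
    exact fan hGhat hB2 h2c p hiB hbB
  · intro hyp
    have h1 : 1 < B.ncard := by rw [← Nat.card_coe_set_eq]; omega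
    obtain ⟨b1, b2, hb1, hb2, hb12⟩ := (Set.one_lt_ncard_iff B.toFinite).1 h1
    have hcard3 : 3 ≤ Fintype.card V := by
      obtain ⟨p0⟩ := hconn.preconnected b1 b2
      obtain ⟨p, hp⟩ := p0.toPath
      have hlen : 2 ≤ p.length := by
        cases p with
        | nil => exact absurd rfl hb12
        | cons hadj q =>
          cases q with
          | nil => exact absurd hadj (hBindep b1 hb1 b2 hb2)
          | cons h2 q2 => simp only [Walk.length_cons]; omega
      have := hp.length_lt
      omega
    refine ⟨hcard3, ?_⟩
    intro v
    rw [connected_iff]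
    constructor
    · intro a b
      obtain ⟨ca, hcav, hcaB, hra⟩ := reach_to_boundary hGhat hyp v a.1 a.2
      obtain ⟨cb, hcbv, hcbB, hrb⟩ := reach_to_boundary hGhat hyp v b.1 b.2
      have hmid : (Ghat.induce {w : V | w ≠ v}).Reachable ⟨ca, hcav⟩ ⟨cb, hcbv⟩ := by
        by_cases hcc : ca = cb
        · subst hcc; rfl
        · have : Ghat.Adj ca cb := (hGhat ca cb).2 (Or.inr ⟨hcaB, hcbB, hcc⟩)
          exact (SimpleGraph.Adj.reachable (by exact this))
      have h1 : (Ghat.induce {w : V | w ≠ v}).Reachable a ⟨ca, hcav⟩ := by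
        convert hra
      have h2 : (Ghat.induce {w : V | w ≠ v}).Reachable b ⟨cb, hcbv⟩ := by
        convert hrb
      exact (h1.trans hmid).trans h2.symm
    · have hlt : 1 < Fintype.card V := by omega
      obtain ⟨x, hx⟩ := Fintype.exists_ne_of_one_lt_card hlt v
      exact ⟨⟨x, hx⟩⟩
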